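/- Let $(M,d)$, $\mu$, and $W \subset M$ closed be as follows: $K_1, K_2$ are measurable kernels with $|K_1(x,y)| \le C_1 e^{-c d(x,y)}$ and $|K_2(x,y)| \le C_2 e^{-c(d(x,y) + d(x,W) + d(y,W))}$, and $\sup_x \int_M e^{-\frac{c}{2}d(x,z)} d\mu(z) \le V < \infty$. Then the composition $K(x,y) = \int K_1(x,z)K_2(z,y) d\mu(z)$ satisfies $|K(x,y)| \le C_1 C_2 V\, e^{-\frac{c}{4}(d(x,y) + d(x,W) + d(y,W))}$. -/

import Mathlib

open MeasureTheory Metric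

/-- Composition of kernels with exponential decay away from a closed
set `W`.  If `‖K₁(x,y)‖ ≤ C₁ e^{-c d(x,y)}`,
`‖K₂(x,y)‖ ≤ C₂ e^{-c (d(x,y) + d(x,W) + d(y,W))}`, and
`∫ e^{-(c/2) d(x,z)} dμ(z) ≤ V` uniformly in `x`, then
`K(x,y) = ∫ K₁(x,z) K₂(z,y) dμ(z)` satisfies
`‖K(x,y)‖ ≤ C₁ C₂ V e^{-(c/4)(d(x,y) + d(x,W) + d(y,W))}`. -/
theorem kernel_composition_exp_decay_near_set
    {M : Type*} [MetricSpace M] [MeasurableSpace M] [OpensMeasurableSpace M]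
    (μ : Measure M) (W : Set M) (hW : W.Nonempty) (hWc : IsClosed W)
    (K₁ K₂ : M → M → ℂ) (C₁ C₂ c V : ℝ)
    (hC₁ : 0 < C₁) (hC₂ : 0 < C₂) (hc : 0 < c) (hV : 0 ≤ V)
    (hK₁m : Measurable (Function.uncurry K₁)) (hK₂m : Measurable (Function.uncurry K₂))
    (hK₁ : ∀ x y, ‖K₁ x y‖ ≤ C₁ * Real.exp (-c * dist x y))
    (hK₂ : ∀ x y, ‖K₂ x y‖ ≤
      C₂ * Real.exp (-c * (dist x y + Metric.infDist x W + Metric.infDist y W)))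
    (hint : ∀ x : M,
      ∫⁻ z, ENNReal.ofReal (Real.exp (-(c / 2) * dist x z)) ∂μ ≤ ENNReal.ofReal V) :
    ∀ x y : M, Integrable (fun z => K₁ x z * K₂ z y) μ ∧
      ‖∫ z, K₁ x z * K₂ z y ∂μ‖ ≤ C₁ * C₂ * V *
        Real.exp (-(c / 4) * (dist x y + Metric.infDist x W + Metric.infDist y W)) := by
  intro x y
  set S : ℝ := dist x y + Metric.infDist x W + Metric.infDist y W with hS
  set A : ℝ := C₁ * C₂ * Real.exp (-(c / 4) * S) with hA
  have hA0 : 0 ≤ A := by positivity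
  -- pointwise bound
  have hpt : ∀ z, ‖K₁ x z * K₂ z y‖ ≤ A * Real.exp (-(c / 2) * dist x z) := by
    intro z
    have h1 := hK₁ x z
    have h2 := hK₂ z y
    have hmul : ‖K₁ x z * K₂ z y‖ ≤
        (C₁ * Real.exp (-c * dist x z)) *
        (C₂ * Real.exp (-c * (dist z y + Metric.infDist z W + Metric.infDist y W))) := by
      rw [norm_mul]
      exact mul_le_mul h1 h2 (norm_nonneg _) (by positivity)
    refine hmul.trans ?_
    have htri1 : dist x y ≤ dist x z + dist z y := dist_triangle x z y
    have htri2 : Metric.infDist x W ≤ Metric.infDist z W + dist x z :=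
      Metric.infDist_le_infDist_add_dist
    have hd1 : (0:ℝ) ≤ dist x z := dist_nonneg
    have hd2 : (0:ℝ) ≤ dist z y := dist_nonneg
    have hi1 : (0:ℝ) ≤ Metric.infDist z W := Metric.infDist_nonneg
    have hi2 : (0:ℝ) ≤ Metric.infDist y W := Metric.infDist_nonneg
    have hexp : Real.exp (-c * dist x z) *
        Real.exp (-c * (dist z y + Metric.infDist z W + Metric.infDist y W)) ≤
        Real.exp (-(c / 4) * S) * Real.exp (-(c / 2) * dist x z) := by
      rw [← Real.exp_add, ← Real.exp_add]
      apply Real.exp_le_exp.mpr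
      simp only [hS]
      nlinarith [hc.le]
    calc C₁ * Real.exp (-c * dist x z) *
          (C₂ * Real.exp (-c * (dist z y + Metric.infDist z W + Metric.infDist y W)))
        = (C₁ * C₂) * (Real.exp (-c * dist x z) *
          Real.exp (-c * (dist z y + Metric.infDist z W + Metric.infDist y W))) := by ring
      _ ≤ (C₁ * C₂) * (Real.exp (-(c / 4) * S) * Real.exp (-(c / 2) * dist x z)) := by
          apply mul_le_mul_of_nonneg_left hexp (by positivity)
      _ = A * Real.exp (-(c / 2) * dist x z) := by rw [hA]; ring
  have hmeas : Measurable (fun z => K₁ x z * K₂ z y) := by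
    have h1 : Measurable (fun z => K₁ x z) :=
      hK₁m.comp (measurable_const.prodMk measurable_id)
    have h2 : Measurable (fun z => K₂ z y) :=
      hK₂m.comp (measurable_id.prodMk measurable_const)
    exact h1.mul h2
  -- lintegral bound
  have hlin : ∫⁻ z, ‖K₁ x z * K₂ z y‖₊ ∂μ ≤ ENNReal.ofReal (A * V) := by
    calc ∫⁻ z, ‖K₁ x z * K₂ z y‖₊ ∂μ
        ≤ ∫⁻ z, ENNReal.ofReal A * ENNReal.ofReal (Real.exp (-(c / 2) * dist x z)) ∂μ := by
          apply lintegral_mono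
          intro z
          show (‖K₁ x z * K₂ z y‖₊ : ENNReal) ≤
            ENNReal.ofReal A * ENNReal.ofReal (Real.exp (-(c / 2) * dist x z))
          rw [← ENNReal.ofReal_mul hA0, ← enorm_eq_nnnorm, ← ofReal_norm]
          exact ENNReal.ofReal_le_ofReal (hpt z)
      _ = ENNReal.ofReal A * ∫⁻ z, ENNReal.ofReal (Real.exp (-(c / 2) * dist x z)) ∂μ := by
          rw [lintegral_const_mul]
          have hcont : Continuous fun z : M => Real.exp (-(c / 2) * dist x z) := by
            exact Real.continuous_exp.comp (continuous_const.mul (Continuous.dist continuous_const continuous_id))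
          exact hcont.measurable.ennreal_ofReal
      _ ≤ ENNReal.ofReal A * ENNReal.ofReal V := by
          exact mul_le_mul_right (hint x) _
      _ = ENNReal.ofReal (A * V) := (ENNReal.ofReal_mul hA0).symm
  have hfin : HasFiniteIntegral (fun z => K₁ x z * K₂ z y) μ :=
    lt_of_le_of_lt hlin ENNReal.ofReal_lt_top
  have hInt : Integrable (fun z => K₁ x z * K₂ z y) μ :=
    ⟨hmeas.aestronglyMeasurable, hfin⟩
  refine ⟨hInt, ?_⟩
  have hnorm := norm_integral_le_lintegral_norm (fun z => K₁ x z * K₂ z y) (μ := μ)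
  calc ‖∫ z, K₁ x z * K₂ z y ∂μ‖
      ≤ (∫⁻ z, ENNReal.ofReal ‖K₁ x z * K₂ z y‖ ∂μ).toReal := hnorm
    _ ≤ (ENNReal.ofReal (A * V)).toReal := by
        apply ENNReal.toReal_mono ENNReal.ofReal_ne_top
        calc ∫⁻ z, ENNReal.ofReal ‖K₁ x z * K₂ z y‖ ∂μ
            = ∫⁻ z, (‖K₁ x z * K₂ z y‖₊ : ENNReal) ∂μ := by
              refine lintegral_congr fun z => ofReal_norm _
          _ ≤ _ := hlin
    _ = A * V := ENNReal.toReal_ofReal (by positivity)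
    _ = C₁ * C₂ * V * Real.exp (-(c / 4) * S) := by rw [hA]; ring
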